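/- arXiv:1306.5556 — 2 statements merged into one kernel-verified Lean document; each statement's English description precedes it below -/
import Mathlib

section
/- Under the general setup, suppose condition (I⁰_ρ) holds for some ρ > 0. Then for every (u,v) in the boundary of V_ρ relative to K (in particular for every (u,v) ∈ K with min_{t∈[a₁,b₁]} u(t) ≤ ρ, min_{t∈[a₂,b₂]} v(t) ≤ ρ and at least one of these minima equal to ρ) and every real μ ≥ 0, one has (u,v) ≠ T(u,v) + μ·(e,e), where e denotes the constant function 1 on [0,1]. (This is the key property from which the paper deduces that the fixed point index of T on V_ρ equals 0.) -/
open MeasureTheory Set Filter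

noncomputable section

/-- The sup norm `‖w‖∞ = sup {|w(t)| : t ∈ [0,1]}`. -/
def supN (w : ℝ → ℝ) : ℝ := sSup ((fun t => |w t|) '' Icc (0:ℝ) 1)

/-- The minimum `min {w(t) : t ∈ [a,b]}`. -/
def minOnIcc (w : ℝ → ℝ) (a b : ℝ) : ℝ := sInf (w '' Icc a b)

/-- The general setup of Infante–Pietramala, "Multiple positive solutions of systems with
coupled nonlinear BCs".  Indices `i, j ∈ {1,2}` of the paper correspond to `0, 1 : Fin 2`. -/
structure Setup where
  f : Fin 2 → ℝ → ℝ → ℝ → ℝ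
  k : Fin 2 → ℝ → ℝ → ℝ
  g : Fin 2 → ℝ → ℝ
  a : Fin 2 → ℝ
  b : Fin 2 → ℝ
  Φ : Fin 2 → ℝ → ℝ
  c : Fin 2 → ℝ
  B : Fin 2 → Fin 2 → Measure ℝ
  C : Fin 2 → Fin 2 → Measure ℝ
  H : Fin 2 → Fin 2 → ℝ → ℝ
  L : Fin 2 → Fin 2 → ℝ → ℝ
  h1 : Fin 2 → Fin 2 → ℝ
  h2 : Fin 2 → Fin 2 → ℝ
  l2 : Fin 2 → Fin 2 → ℝ
  γ : Fin 2 → Fin 2 → ℝ → ℝ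
  cγ : Fin 2 → Fin 2 → ℝ
  -- the nonlinearities fᵢ : [0,1] × [0,∞)² → [0,∞) satisfy Carathéodory conditions
  f_nonneg : ∀ i, ∀ t ∈ Icc (0:ℝ) 1, ∀ u, 0 ≤ u → ∀ v, 0 ≤ v → 0 ≤ f i t u v
  f_meas : ∀ i u v, Measurable fun t => f i t u v
  f_cont : ∀ i, ∀ᵐ t ∂(volume.restrict (Icc (0:ℝ) 1)),
      ContinuousOn (fun p : ℝ × ℝ => f i t p.1 p.2) (Ici 0 ×ˢ Ici 0)
  f_bdd : ∀ i, ∀ r > (0:ℝ), ∃ φ : ℝ → ℝ, MemLp φ ⊤ (volume.restrict (Icc (0:ℝ) 1)) ∧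
      ∀ᵐ t ∂(volume.restrict (Icc (0:ℝ) 1)), ∀ u ∈ Icc (0:ℝ) r, ∀ v ∈ Icc (0:ℝ) r,
        f i t u v ≤ φ t
  -- the kernels
  k_nonneg : ∀ i, ∀ t ∈ Icc (0:ℝ) 1, ∀ s ∈ Icc (0:ℝ) 1, 0 ≤ k i t s
  k_meas : ∀ i, Measurable (Function.uncurry (k i))
  k_cont : ∀ i, ∀ τ ∈ Icc (0:ℝ) 1, ∀ᵐ s ∂(volume.restrict (Icc (0:ℝ) 1)),
      Tendsto (fun t => |k i t s - k i τ s|) (nhds τ) (nhds 0)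
  -- the subintervals [aᵢ,bᵢ] ⊆ [0,1], the functions Φᵢ and the constants cᵢ ∈ (0,1]
  ab_mem : ∀ i, 0 ≤ a i ∧ a i ≤ b i ∧ b i ≤ 1
  Φ_mem : ∀ i, MemLp (Φ i) ⊤ (volume.restrict (Icc (0:ℝ) 1))
  c_mem : ∀ i, c i ∈ Ioc (0:ℝ) 1
  k_le : ∀ i, ∀ t ∈ Icc (0:ℝ) 1, ∀ᵐ s ∂(volume.restrict (Icc (0:ℝ) 1)), k i t s ≤ Φ i s
  k_ge : ∀ i, ∀ t ∈ Icc (a i) (b i), ∀ᵐ s ∂(volume.restrict (Icc (0:ℝ) 1)),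
      c i * Φ i s ≤ k i t s
  -- the weights gᵢ
  g_meas : ∀ i, Measurable (g i)
  g_nonneg : ∀ i, ∀ᵐ s ∂(volume.restrict (Icc (0:ℝ) 1)), 0 ≤ g i s
  gΦ_int : ∀ i, IntegrableOn (fun s => g i s * Φ i s) (Icc (0:ℝ) 1)
  gΦ_pos : ∀ i, 0 < ∫ s in Icc (a i) (b i), Φ i s * g i s
  -- the Stieltjes measures defining the functionals β and δ
  B_fin : ∀ i j, IsFiniteMeasure (B i j)
  C_fin : ∀ i j, IsFiniteMeasure (C i j)
  B_supp : ∀ i j, B i j (Icc (0:ℝ) 1)ᶜ = 0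
  C_supp : ∀ i j, C i j (Icc (0:ℝ) 1)ᶜ = 0
  -- the nonlinear boundary functions H, L with their linear bounds
  H_cont : ∀ i j, ContinuousOn (H i j) (Ici 0)
  L_cont : ∀ i j, ContinuousOn (L i j) (Ici 0)
  H_nonneg : ∀ i j w, 0 ≤ w → 0 ≤ H i j w
  L_nonneg : ∀ i j w, 0 ≤ w → 0 ≤ L i j w
  h1_nonneg : ∀ i j, 0 ≤ h1 i j
  h2_nonneg : ∀ i j, 0 ≤ h2 i j
  l2_nonneg : ∀ i j, 0 ≤ l2 i j
  H_bound_lower : ∀ i j w, 0 ≤ w → h1 i j * w ≤ H i j w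
  H_bound_upper : ∀ i j w, 0 ≤ w → H i j w ≤ h2 i j * w
  L_bound : ∀ i j w, 0 ≤ w → L i j w ≤ l2 i j * w
  -- the functions γᵢⱼ
  γ_cont : ∀ i j, ContinuousOn (γ i j) (Icc (0:ℝ) 1)
  γ_nonneg : ∀ i j, ∀ t ∈ Icc (0:ℝ) 1, 0 ≤ γ i j t
  hβγ : ∀ i j, h2 i j * ∫ s, γ i j s ∂(B i j) < 1
  cγ_mem : ∀ i j, cγ i j ∈ Ioc (0:ℝ) 1
  γ_ge : ∀ i j, ∀ t ∈ Icc (a i) (b i), cγ i j * supN (γ i j) ≤ γ i j t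
  -- positivity of the determinants Dᵢ
  D_pos : ∀ i,
      0 < (1 - h2 i 0 * ∫ s, γ i 0 s ∂(B i 0)) * (1 - h2 i 1 * ∫ s, γ i 1 s ∂(B i 1))
        - h2 i 0 * h2 i 1 * (∫ s, γ i 1 s ∂(B i 0)) * (∫ s, γ i 0 s ∂(B i 1))

namespace Setup

variable (S : Setup)

/-- The functionals `β_{ij}[w] = ∫₀¹ w dB_{ij}`. -/
def β (i j : Fin 2) (w : ℝ → ℝ) : ℝ := ∫ s, w s ∂(S.B i j)

/-- The functionals `δ_{ij}[w] = ∫₀¹ w dC_{ij}`. -/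
def δ (i j : Fin 2) (w : ℝ → ℝ) : ℝ := ∫ s, w s ∂(S.C i j)

/-- The Hammerstein integral operators `Fᵢ`. -/
def F (i : Fin 2) (u v : ℝ → ℝ) (t : ℝ) : ℝ :=
  ∫ s in Icc (0:ℝ) 1, S.k i t s * S.g i s * S.f i s (u s) (v s)

/-- First component of the operator `T`. -/
def T1 (u v : ℝ → ℝ) (t : ℝ) : ℝ :=
  S.γ 0 0 t * (S.H 0 0 (S.β 0 0 u) + S.L 0 0 (S.δ 0 0 v))
    + S.γ 0 1 t * (S.H 0 1 (S.β 0 1 u) + S.L 0 1 (S.δ 0 1 v))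
    + S.F 0 u v t

/-- Second component of the operator `T`. -/
def T2 (u v : ℝ → ℝ) (t : ℝ) : ℝ :=
  S.γ 1 0 t * (S.L 1 0 (S.δ 1 0 u) + S.H 1 0 (S.β 1 0 v))
    + S.γ 1 1 t * (S.L 1 1 (S.δ 1 1 u) + S.H 1 1 (S.β 1 1 v))
    + S.F 1 u v t

/-- The constants `c̃ᵢ = min{cᵢ, c_{i1}, c_{i2}}`. -/
def ctilde (i : Fin 2) : ℝ := min (S.c i) (min (S.cγ i 0) (S.cγ i 1))

/-- The constant `c = min{c̃₁, c̃₂}`. -/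
def cc : ℝ := min (S.ctilde 0) (S.ctilde 1)

/-- Membership of `(u,v)` in the cone `K = K̃₁ × K̃₂`. -/
def inK (u v : ℝ → ℝ) : Prop :=
  ContinuousOn u (Icc (0:ℝ) 1) ∧ ContinuousOn v (Icc (0:ℝ) 1) ∧
  (∀ t ∈ Icc (0:ℝ) 1, 0 ≤ u t) ∧ (∀ t ∈ Icc (0:ℝ) 1, 0 ≤ v t) ∧
  S.ctilde 0 * supN u ≤ minOnIcc u (S.a 0) (S.b 0) ∧
  S.ctilde 1 * supN v ≤ minOnIcc v (S.a 1) (S.b 1)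

/-- `𝒦_{ij}(s) = ∫₀¹ kᵢ(t,s) dB_{ij}(t)`. -/
def KK (i j : Fin 2) (s : ℝ) : ℝ := ∫ t, S.k i t s ∂(S.B i j)

/-- `Qᵢ = Σ_l β_{i1}[γ_{il}] l_{il2} δ_{il}[1]`. -/
def Q (i : Fin 2) : ℝ := ∑ l, S.β i 0 (S.γ i l) * S.l2 i l * S.δ i l (fun _ => 1)

/-- `Sᵢ = Σ_l β_{i2}[γ_{il}] l_{il2} δ_{il}[1]`. -/
def Sq (i : Fin 2) : ℝ := ∑ l, S.β i 1 (S.γ i l) * S.l2 i l * S.δ i l (fun _ => 1)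

/-- The determinant `Dᵢ`. -/
def D (i : Fin 2) : ℝ :=
  (1 - S.h2 i 0 * S.β i 0 (S.γ i 0)) * (1 - S.h2 i 1 * S.β i 1 (S.γ i 1))
    - S.h2 i 0 * S.h2 i 1 * S.β i 0 (S.γ i 1) * S.β i 1 (S.γ i 0)

/-- The determinant `𝐷̲ᵢ` (with the lower constants `h_{ij1}`). -/
def Dl (i : Fin 2) : ℝ :=
  (1 - S.h1 i 0 * S.β i 0 (S.γ i 0)) * (1 - S.h1 i 1 * S.β i 1 (S.γ i 1))
    - S.h1 i 0 * S.h1 i 1 * S.β i 0 (S.γ i 1) * S.β i 1 (S.γ i 0)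

def θ1 (i : Fin 2) : ℝ := (1 - S.h2 i 1 * S.β i 1 (S.γ i 1)) / S.D i
def θ2 (i : Fin 2) : ℝ := S.h2 i 1 * S.β i 0 (S.γ i 1) / S.D i
def θ3 (i : Fin 2) : ℝ := S.h2 i 0 * S.β i 1 (S.γ i 0) / S.D i
def θ4 (i : Fin 2) : ℝ := (1 - S.h2 i 0 * S.β i 0 (S.γ i 0)) / S.D i

/-- `1/mᵢ = sup_{t ∈ [0,1]} ∫₀¹ kᵢ(t,s)gᵢ(s) ds`. -/
def mInv (i : Fin 2) : ℝ :=
  sSup ((fun t => ∫ s in Icc (0:ℝ) 1, S.k i t s * S.g i s) '' Icc (0:ℝ) 1)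

/-- `1/Mᵢ = inf_{t ∈ [aᵢ,bᵢ]} ∫_{aᵢ}^{bᵢ} kᵢ(t,s)gᵢ(s) ds`. -/
def MInv (i : Fin 2) : ℝ :=
  sInf ((fun t => ∫ s in Icc (S.a i) (S.b i), S.k i t s * S.g i s) '' Icc (S.a i) (S.b i))

/-- `fᵢ^{0,ρ} = sup{fᵢ(t,u,v)/ρ : t ∈ [0,1], u,v ∈ [0,ρ]}`. -/
def fSup (i : Fin 2) (ρ : ℝ) : ℝ :=
  sSup {x | ∃ t ∈ Icc (0:ℝ) 1, ∃ u ∈ Icc (0:ℝ) ρ, ∃ v ∈ Icc (0:ℝ) ρ, x = S.f i t u v / ρ}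

/-- `f_{1,(ρ,ρ/c)}`. -/
def fInf1 (ρ : ℝ) : ℝ :=
  sInf {x | ∃ t ∈ Icc (S.a 0) (S.b 0), ∃ u ∈ Icc ρ (ρ / S.cc), ∃ v ∈ Icc (0:ℝ) (ρ / S.cc),
    x = S.f 0 t u v / ρ}

/-- `f_{2,(ρ,ρ/c)}`. -/
def fInf2 (ρ : ℝ) : ℝ :=
  sInf {x | ∃ t ∈ Icc (S.a 1) (S.b 1), ∃ u ∈ Icc (0:ℝ) (ρ / S.cc), ∃ v ∈ Icc ρ (ρ / S.cc),
    x = S.f 1 t u v / ρ}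

def fInf (i : Fin 2) (ρ : ℝ) : ℝ := if i = 0 then S.fInf1 ρ else S.fInf2 ρ

/-- `f*_{i,(0,ρ/c)}`. -/
def fInfStar (i : Fin 2) (ρ : ℝ) : ℝ :=
  sInf {x | ∃ t ∈ Icc (S.a i) (S.b i), ∃ u ∈ Icc (0:ℝ) (ρ / S.cc),
    ∃ v ∈ Icc (0:ℝ) (ρ / S.cc), x = S.f i t u v / ρ}

/-- Condition `(I¹_ρ)`. -/
def CondI1 (ρ : ℝ) : Prop := ∀ i : Fin 2,
  S.fSup i ρ *
      ((supN (S.γ i 0) * S.h2 i 0 * S.θ1 i + supN (S.γ i 1) * S.h2 i 1 * S.θ3 i)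
          * (∫ s in Icc (0:ℝ) 1, S.KK i 0 s * S.g i s)
        + (supN (S.γ i 0) * S.h2 i 0 * S.θ2 i + supN (S.γ i 1) * S.h2 i 1 * S.θ4 i)
          * (∫ s in Icc (0:ℝ) 1, S.KK i 1 s * S.g i s)
        + S.mInv i)
    + supN (S.γ i 0) * S.h2 i 0 * (S.θ1 i * S.Q i + S.θ2 i * S.Sq i)
    + supN (S.γ i 1) * S.h2 i 1 * (S.θ3 i * S.Q i + S.θ4 i * S.Sq i)
    + (∑ j, supN (S.γ i j) * S.l2 i j * S.δ i j fun _ => 1) < 1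

/-- The bracket appearing in conditions `(I⁰_ρ)` and `(I⁰_ρ)*`. -/
def Ψ (i : Fin 2) : ℝ :=
  (S.cγ i 0 * supN (S.γ i 0) * S.h1 i 0 / S.Dl i * (1 - S.h1 i 1 * S.β i 1 (S.γ i 1))
      + S.cγ i 1 * supN (S.γ i 1) * S.h1 i 1 / S.Dl i * (S.h1 i 0 * S.β i 1 (S.γ i 0)))
    * (∫ s in Icc (S.a i) (S.b i), S.KK i 0 s * S.g i s)
  + (S.cγ i 0 * supN (S.γ i 0) * S.h1 i 0 / S.Dl i * (S.h1 i 1 * S.β i 0 (S.γ i 1))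
      + S.cγ i 1 * supN (S.γ i 1) * S.h1 i 1 / S.Dl i * (1 - S.h1 i 0 * S.β i 0 (S.γ i 0)))
    * (∫ s in Icc (S.a i) (S.b i), S.KK i 1 s * S.g i s)
  + S.MInv i

/-- Condition `(I⁰_ρ)`. -/
def CondI0 (ρ : ℝ) : Prop := ∀ i : Fin 2, 1 < S.fInf i ρ * S.Ψ i

/-- Condition `(I⁰_ρ)*`. -/
def CondI0Star (ρ : ℝ) : Prop := ∃ i : Fin 2, 1 < S.fInfStar i ρ * S.Ψ i

/-- `(u,v)` is a fixed point of `T` (as functions on `[0,1]`). -/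
def IsFixedPt (u v : ℝ → ℝ) : Prop :=
  ∀ t ∈ Icc (0:ℝ) 1, S.T1 u v t = u t ∧ S.T2 u v t = v t

/-- `(u,v)` is a positive solution: a fixed point of `T` in `K` with `‖(u,v)‖ > 0`. -/
def PosSol (u v : ℝ → ℝ) : Prop :=
  S.inK u v ∧ S.IsFixedPt u v ∧ 0 < max (supN u) (supN v)

/-- Two pairs are distinct as elements of `C[0,1] × C[0,1]`. -/
def Distinct (u₁ v₁ u₂ v₂ : ℝ → ℝ) : Prop :=
  ∃ t ∈ Icc (0:ℝ) 1, u₁ t ≠ u₂ t ∨ v₁ t ≠ v₂ t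

end Setup

/-! ### Auxiliary general lemmas -/

namespace IPaux

/-- composition with a countable-range measurable function is measurable. -/
lemma meas_comp_countable {φ : ℝ → ℝ} (hφ : Measurable φ) (hc : (Set.range φ).Countable)
    (G : ℝ → ℝ → ℝ) (hG : ∀ x, Measurable fun t => G t x) :
    Measurable fun t => G t (φ t) := by
  intro A hA
  have : (fun t => G t (φ t)) ⁻¹' A
      = ⋃ x ∈ Set.range φ, (φ ⁻¹' {x} ∩ (fun t => G t x) ⁻¹' A) := by
    ext t
    simp only [Set.mem_preimage, Set.mem_iUnion, Set.mem_inter_iff, Set.mem_singleton_iff]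
    constructor
    · intro h; exact ⟨φ t, ⟨t, rfl⟩, rfl, h⟩
    · rintro ⟨x, _, rfl, h⟩; exact h
  rw [this]
  exact MeasurableSet.biUnion hc fun x _ => ((hφ (measurableSet_singleton x)).inter (hG x hA))

/-- the step approximation. -/
def stepf (n : ℕ) (t : ℝ) : ℝ := min 1 ((⌊t * n⌋₊ : ℝ) / n)

lemma stepf_mem (n : ℕ) (t : ℝ) : stepf n t ∈ Icc (0:ℝ) 1 := by
  constructor
  · exact le_min zero_le_one (by positivity)
  · exact min_le_left _ _

lemma stepf_measurable (n : ℕ) : Measurable (stepf n) := by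
  have h1 : Monotone (stepf n) := by
    intro s t hst
    refine min_le_min le_rfl ?_
    have : ⌊s * n⌋₊ ≤ ⌊t * n⌋₊ :=
      Nat.floor_le_floor (mul_le_mul_of_nonneg_right hst (Nat.cast_nonneg n))
    have : (⌊s * n⌋₊ : ℝ) ≤ (⌊t * n⌋₊ : ℝ) := by exact_mod_cast this
    gcongr
  exact h1.measurable

lemma stepf_countable_range (n : ℕ) : (Set.range (stepf n)).Countable := by
  have : Set.range (stepf n) ⊆ Set.range (fun m : ℕ => min 1 ((m : ℝ) / n)) := by
    rintro x ⟨t, rfl⟩; exact ⟨⌊t * n⌋₊, rfl⟩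
  exact (Set.countable_range _).mono this

lemma stepf_tendsto {t : ℝ} (ht : t ∈ Icc (0:ℝ) 1) :
    Tendsto (fun n => stepf n t) atTop (nhds t) := by
  have h0 : Tendsto (fun n : ℕ => (⌊t * n⌋₊ : ℝ) / n) atTop (nhds t) :=
    (tendsto_nat_floor_mul_div_atTop ht.1).comp tendsto_natCast_atTop_atTop
  have : Tendsto (fun n : ℕ => min 1 ((⌊t * n⌋₊ : ℝ) / n)) atTop (nhds (min 1 t)) :=
    (continuous_const.min continuous_id).continuousAt.tendsto.comp h0
  simpa [stepf, min_eq_right ht.2] using this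

end IPaux

namespace IPaux

open scoped Topology ENNReal NNReal

/-- Carathéodory composition: a.e. strong measurability of `s ↦ f s (u s) (v s)`. -/
lemma aesm_comp {f : ℝ → ℝ → ℝ → ℝ} {u v : ℝ → ℝ}
    (hfm : ∀ x y, Measurable fun t => f t x y)
    (hfc : ∀ᵐ t ∂(volume.restrict (Icc (0:ℝ) 1)),
      ContinuousOn (fun p : ℝ × ℝ => f t p.1 p.2) (Ici 0 ×ˢ Ici 0))
    (hu : ContinuousOn u (Icc (0:ℝ) 1)) (hv : ContinuousOn v (Icc (0:ℝ) 1))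
    (hu0 : ∀ t ∈ Icc (0:ℝ) 1, 0 ≤ u t) (hv0 : ∀ t ∈ Icc (0:ℝ) 1, 0 ≤ v t) :
    AEStronglyMeasurable (fun s => f s (u s) (v s)) (volume.restrict (Icc (0:ℝ) 1)) := by
  set G : ℕ → ℝ → ℝ := fun n t => f t (u (stepf n t)) (v (stepf n t)) with hG
  have hGm : ∀ n, Measurable (G n) := by
    intro n
    exact meas_comp_countable (stepf_measurable n) (stepf_countable_range n)
      (fun t x => f t (u x) (v x)) (fun x => hfm (u x) (v x))
  have hae : ∀ᵐ t ∂(volume.restrict (Icc (0:ℝ) 1)),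
      Tendsto (fun n => G n t) atTop (nhds (f t (u t) (v t))) := by
    filter_upwards [hfc, ae_restrict_mem measurableSet_Icc] with t hct ht
    have hst : Tendsto (fun n => stepf n t) atTop (𝓝[Icc (0:ℝ) 1] t) := by
      refine tendsto_nhdsWithin_iff.2 ⟨stepf_tendsto ht, Eventually.of_forall fun n => stepf_mem n t⟩
    have hpair : Tendsto (fun n => (u (stepf n t), v (stepf n t))) atTop
        (𝓝[Ici (0:ℝ) ×ˢ Ici (0:ℝ)] (u t, v t)) := by
      refine tendsto_nhdsWithin_iff.2 ⟨?_, Eventually.of_forall fun n =>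
        ⟨hu0 _ (stepf_mem n t), hv0 _ (stepf_mem n t)⟩⟩
      exact (((hu t ht).tendsto.comp hst).prodMk_nhds ((hv t ht).tendsto.comp hst))
    exact ((hct (u t, v t) ⟨hu0 t ht, hv0 t ht⟩).tendsto).comp hpair
  exact aestronglyMeasurable_of_tendsto_ae atTop (fun n => (hGm n).aestronglyMeasurable) hae

/-- A function continuous on `[0,1]` is integrable w.r.t. any finite measure supported in `[0,1]`. -/
lemma integrable_of_contOn {μ : Measure ℝ} [IsFiniteMeasure μ] (hμ : μ (Icc (0:ℝ) 1)ᶜ = 0)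
    {w : ℝ → ℝ} (hw : ContinuousOn w (Icc (0:ℝ) 1)) : Integrable w μ := by
  set cl : ℝ → ℝ := fun t => min 1 (max 0 t) with hcl
  have hclcont : Continuous cl := continuous_const.min (continuous_const.max continuous_id)
  have hclmem : ∀ t, cl t ∈ Icc (0:ℝ) 1 :=
    fun t => ⟨le_min zero_le_one (le_max_left 0 t), min_le_left _ _⟩
  have hc : Continuous (w ∘ cl) := hw.comp_continuous hclcont hclmem
  obtain ⟨Cb, hCb⟩ := isCompact_Icc.exists_bound_of_continuousOn hw
  have hint : Integrable (w ∘ cl) μ := by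
    refine Integrable.mono' (integrable_const Cb) hc.aestronglyMeasurable
      (Eventually.of_forall fun t => hCb _ (hclmem t))
  refine hint.congr ?_
  have : ∀ᵐ t ∂μ, t ∈ Icc (0:ℝ) 1 := mem_ae_iff.2 hμ
  filter_upwards [this] with t ht
  simp [hcl, Function.comp, max_eq_right ht.1, min_eq_right ht.2]

/-- a.e. bound for a `MemLp ⊤` function. -/
lemma memLp_top_ae_le {μ : Measure ℝ} {φ : ℝ → ℝ} (h : MemLp φ ⊤ μ) :
    ∀ᵐ s ∂μ, φ s ≤ (eLpNorm φ ⊤ μ).toReal := by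
  have hlt : eLpNorm φ ⊤ μ < ⊤ := h.2
  have := ae_le_eLpNormEssSup (f := φ) (μ := μ)
  filter_upwards [this] with s hs
  calc φ s ≤ |φ s| := le_abs_self _
    _ = ((‖φ s‖₊ : ℝ≥0∞)).toReal := by simp [Real.norm_eq_abs]
    _ ≤ (eLpNorm φ ⊤ μ).toReal := by
        apply ENNReal.toReal_mono hlt.ne
        rw [eLpNorm_exponent_top, ← enorm_eq_nnnorm]; exact hs

end IPaux


/-! ### Auxiliary lemmas on the setup -/

section Helpers

open IPaux Function
open scoped Topology ENNReal

namespace Setup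

variable (S : Setup)

lemma hab (i : Fin 2) : S.a i ≤ S.b i := (S.ab_mem i).2.1

lemma hsub (i : Fin 2) : Icc (S.a i) (S.b i) ⊆ Icc (0:ℝ) 1 :=
  Icc_subset_Icc (S.ab_mem i).1 (S.ab_mem i).2.2

lemma ctilde_pos (i : Fin 2) : 0 < S.ctilde i :=
  lt_min (S.c_mem i).1 (lt_min (S.cγ_mem i 0).1 (S.cγ_mem i 1).1)

lemma cc_pos : 0 < S.cc := lt_min (S.ctilde_pos 0) (S.ctilde_pos 1)

lemma cc_le_ctilde (i : Fin 2) : S.cc ≤ S.ctilde i := by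
  fin_cases i
  · exact min_le_left _ _
  · exact min_le_right _ _

lemma Bae (i j : Fin 2) : ∀ᵐ t ∂(S.B i j), t ∈ Icc (0:ℝ) 1 := mem_ae_iff.2 (S.B_supp i j)

lemma Cae (i j : Fin 2) : ∀ᵐ t ∂(S.C i j), t ∈ Icc (0:ℝ) 1 := mem_ae_iff.2 (S.C_supp i j)

lemma β_nonneg (i j : Fin 2) {w : ℝ → ℝ} (hw : ∀ t ∈ Icc (0:ℝ) 1, 0 ≤ w t) :
    0 ≤ S.β i j w := by
  refine integral_nonneg_of_ae ?_
  filter_upwards [S.Bae i j] with t ht using hw t ht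

lemma δ_nonneg (i j : Fin 2) {w : ℝ → ℝ} (hw : ∀ t ∈ Icc (0:ℝ) 1, 0 ≤ w t) :
    0 ≤ S.δ i j w := by
  refine integral_nonneg_of_ae ?_
  filter_upwards [S.Cae i j] with t ht using hw t ht

lemma βγ_nonneg (i j l : Fin 2) : 0 ≤ S.β i j (S.γ i l) := S.β_nonneg i j (S.γ_nonneg i l)

lemma h1_le_h2 (i j : Fin 2) : S.h1 i j ≤ S.h2 i j := by
  have h1 := S.H_bound_lower i j 1 zero_le_one
  have h2 := S.H_bound_upper i j 1 zero_le_one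
  linarith

end Setup

lemma le_supN {w : ℝ → ℝ} (hw : ContinuousOn w (Icc (0:ℝ) 1)) {t : ℝ}
    (ht : t ∈ Icc (0:ℝ) 1) : w t ≤ supN w := by
  have hc : IsCompact ((fun t => |w t|) '' Icc (0:ℝ) 1) :=
    isCompact_Icc.image_of_continuousOn hw.abs
  exact (le_abs_self _).trans (le_csSup hc.bddAbove ⟨t, ht, rfl⟩)

lemma supN_nonneg (w : ℝ → ℝ) : 0 ≤ supN w :=
  Real.sSup_nonneg (by rintro x ⟨t, -, rfl⟩; positivity)

lemma minOn_le {w : ℝ → ℝ} {a b : ℝ} (hw : ContinuousOn w (Icc a b)) {t : ℝ}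
    (ht : t ∈ Icc a b) : minOnIcc w a b ≤ w t :=
  csInf_le (isCompact_Icc.image_of_continuousOn hw).bddBelow ⟨t, ht, rfl⟩

lemma le_minOn {w : ℝ → ℝ} {a b C : ℝ} (hab : a ≤ b)
    (h : ∀ t ∈ Icc a b, C ≤ w t) : C ≤ minOnIcc w a b := by
  refine le_csInf (((nonempty_Icc).2 hab).image w) ?_
  rintro x ⟨t, ht, rfl⟩
  exact h t ht

end Helpers

/-! ### The core estimate -/

section Core

open IPaux Function
open scoped Topology ENNReal


lemma IPaux.system_bound {a0 b1 e00 e01 e10 e11 P0 P1 A0 A1 x y Dl : ℝ}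
    (ha0 : 0 ≤ a0) (hb1 : 0 ≤ b1) (he01 : 0 ≤ e01) (he10 : 0 ≤ e10)
    (hx : e00 * A0 + e01 * A1 + P0 ≤ x) (hy : e10 * A0 + e11 * A1 + P1 ≤ y)
    (hA0 : a0 * x ≤ A0) (hA1 : b1 * y ≤ A1)
    (hd1 : 0 < 1 - a0 * e00) (hd2 : 0 < 1 - b1 * e11)
    (hDl : Dl = (1 - a0 * e00) * (1 - b1 * e11) - a0 * b1 * e01 * e10)
    (hDlpos : 0 < Dl) :
    a0 * ((1 - b1 * e11) * P0 + b1 * e01 * P1) / Dl ≤ A0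
    ∧ b1 * (a0 * e10 * P0 + (1 - a0 * e00) * P1) / Dl ≤ A1 := by
  have h1 : a0 * e00 * A0 + a0 * e01 * A1 + a0 * P0 ≤ A0 := by
    nlinarith [mul_le_mul_of_nonneg_left hx ha0]
  have h2 : b1 * e10 * A0 + b1 * e11 * A1 + b1 * P1 ≤ A1 := by
    nlinarith [mul_le_mul_of_nonneg_left hy hb1]
  constructor
  · rw [div_le_iff₀ hDlpos, hDl]
    nlinarith [mul_le_mul_of_nonneg_left h2 (mul_nonneg ha0 he01),
      mul_le_mul_of_nonneg_right h1 hd2.le]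
  · rw [div_le_iff₀ hDlpos, hDl]
    nlinarith [mul_le_mul_of_nonneg_left h1 (mul_nonneg hb1 he10),
      mul_le_mul_of_nonneg_right h2 hd1.le]

set_option maxHeartbeats 400000 in
lemma Setup.core (S : Setup) {ρ μ0 : ℝ} (hρ : 0 < ρ) (hμ0 : 0 ≤ μ0) (i : Fin 2)
    (u v w : ℝ → ℝ) (A0 A1 : ℝ)
    (hu : ContinuousOn u (Icc (0:ℝ) 1)) (hv : ContinuousOn v (Icc (0:ℝ) 1))
    (hu0 : ∀ t ∈ Icc (0:ℝ) 1, 0 ≤ u t) (hv0 : ∀ t ∈ Icc (0:ℝ) 1, 0 ≤ v t)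
    (hub : ∀ s ∈ Icc (0:ℝ) 1, u s ≤ ρ / S.cc) (hvb : ∀ s ∈ Icc (0:ℝ) 1, v s ≤ ρ / S.cc)
    (hA0 : S.h1 i 0 * (∫ t, w t ∂(S.B i 0)) ≤ A0)
    (hA1 : S.h1 i 1 * (∫ t, w t ∂(S.B i 1)) ≤ A1)
    (hA0n : 0 ≤ A0) (hA1n : 0 ≤ A1)
    (heq : ∀ t ∈ Icc (0:ℝ) 1, w t = S.γ i 0 t * A0 + S.γ i 1 t * A1 + S.F i u v t + μ0)
    (hflow : ∀ s ∈ Icc (S.a i) (S.b i), S.fInf i ρ * ρ ≤ S.f i s (u s) (v s))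
    (hfinf : 0 ≤ S.fInf i ρ)
    (hI : 1 < S.fInf i ρ * S.Ψ i) :
    ρ < minOnIcc w (S.a i) (S.b i) := by
  classical
  haveI hBf0 : IsFiniteMeasure (S.B i 0) := S.B_fin i 0
  haveI hBf1 : IsFiniteMeasure (S.B i 1) := S.B_fin i 1
  have hccpos := S.cc_pos
  have hsIcc : ∀ᵐ s ∂(volume.restrict (Icc (0:ℝ) 1)), s ∈ Icc (0:ℝ) 1 :=
    ae_restrict_mem measurableSet_Icc
  have hfc_aesm : AEStronglyMeasurable (fun s => S.f i s (u s) (v s))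
      (volume.restrict (Icc (0:ℝ) 1)) :=
    IPaux.aesm_comp (S.f_meas i) (S.f_cont i) hu hv hu0 hv0
  have hfc0 : ∀ s ∈ Icc (0:ℝ) 1, 0 ≤ S.f i s (u s) (v s) := fun s hs =>
    S.f_nonneg i s hs _ (hu0 s hs) _ (hv0 s hs)
  have hfc0ae : ∀ᵐ s ∂(volume.restrict (Icc (0:ℝ) 1)), 0 ≤ S.f i s (u s) (v s) := by
    filter_upwards [hsIcc] with s hs using hfc0 s hs
  have hr : 0 < ρ / S.cc := div_pos hρ hccpos
  obtain ⟨φ, hφmem, hφbd⟩ := S.f_bdd i (ρ / S.cc) hr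
  set Cφ := (eLpNorm φ ⊤ (volume.restrict (Icc (0:ℝ) 1))).toReal with hCφdef
  have hCφ0 : (0:ℝ) ≤ Cφ := ENNReal.toReal_nonneg
  have hfcCφ : ∀ᵐ s ∂(volume.restrict (Icc (0:ℝ) 1)), S.f i s (u s) (v s) ≤ Cφ := by
    filter_upwards [hφbd, IPaux.memLp_top_ae_le hφmem, hsIcc] with s h1 h2 hs
    exact le_trans (h1 _ ⟨hu0 s hs, hub s hs⟩ _ ⟨hv0 s hs, hvb s hs⟩) h2
  set Φ0 := (S.Φ_mem i).1.mk (S.Φ i) with hΦ0def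
  have hΦ0m : StronglyMeasurable Φ0 := (S.Φ_mem i).1.stronglyMeasurable_mk
  have hΦ0e : S.Φ i =ᵐ[volume.restrict (Icc (0:ℝ) 1)] Φ0 := (S.Φ_mem i).1.ae_eq_mk
  have hgΦ0 : Integrable (fun s => S.g i s * Φ0 s) (volume.restrict (Icc (0:ℝ) 1)) := by
    refine (S.gΦ_int i).congr ?_
    filter_upwards [hΦ0e] with s hs
    rw [hs]
  have hkΦ0 : ∀ t ∈ Icc (0:ℝ) 1, ∀ᵐ s ∂(volume.restrict (Icc (0:ℝ) 1)),
      S.k i t s ≤ Φ0 s := by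
    intro t ht
    filter_upwards [S.k_le i t ht, hΦ0e] with s h1 h2
    rw [← h2]; exact h1
  have hg0 : ∀ᵐ s ∂(volume.restrict (Icc (0:ℝ) 1)), 0 ≤ S.g i s := S.g_nonneg i
  have hksec : ∀ t : ℝ, Measurable fun s => S.k i t s := fun t =>
    (S.k_meas i).comp measurable_prodMk_left
  -- pointwise-in-t integrability of the integrand of F
  have hFint : ∀ t ∈ Icc (0:ℝ) 1, Integrable
      (fun s => S.k i t s * S.g i s * S.f i s (u s) (v s))
      (volume.restrict (Icc (0:ℝ) 1)) := by
    intro t ht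
    refine Integrable.mono' (hgΦ0.mul_const Cφ)
      ((((hksec t).mul (S.g_meas i)).aestronglyMeasurable).mul hfc_aesm) ?_
    filter_upwards [hkΦ0 t ht, hg0, hfcCφ, hsIcc] with s hk hg hfC hs
    have hk0 : 0 ≤ S.k i t s := S.k_nonneg i t ht s hs
    have hf0' : 0 ≤ S.f i s (u s) (v s) := hfc0 s hs
    rw [Real.norm_eq_abs, abs_of_nonneg (by positivity)]
    calc S.k i t s * S.g i s * S.f i s (u s) (v s) ≤ (Φ0 s * S.g i s) * Cφ := by
          refine mul_le_mul (mul_le_mul_of_nonneg_right hk hg) hfC hf0'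
            (mul_nonneg (hk0.trans hk) hg)
      _ = S.g i s * Φ0 s * Cφ := by ring
  have hkgint : ∀ t ∈ Icc (0:ℝ) 1, Integrable
      (fun s => S.k i t s * S.g i s) (volume.restrict (Icc (0:ℝ) 1)) := by
    intro t ht
    refine Integrable.mono' hgΦ0
      (((hksec t).mul (S.g_meas i)).aestronglyMeasurable) ?_
    filter_upwards [hkΦ0 t ht, hg0, hsIcc] with s hk hg hs
    have hk0 : 0 ≤ S.k i t s := S.k_nonneg i t ht s hs
    rw [Real.norm_eq_abs, abs_of_nonneg (by positivity)]
    exact (mul_le_mul_of_nonneg_right hk hg).trans_eq (mul_comm _ _)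
  -- a.e. facts on the product measures
  have hfstIcc : ∀ j : Fin 2, ∀ᵐ p ∂((S.B i j).prod (volume.restrict (Icc (0:ℝ) 1))),
      p.1 ∈ Icc (0:ℝ) 1 := by
    intro j
    haveI := S.B_fin i j
    have hnull0 : ((S.B i j).prod (volume.restrict (Icc (0:ℝ) 1)))
        {p : ℝ × ℝ | p.1 ∈ Icc (0:ℝ) 1}ᶜ = 0 := by
      have hset : {p : ℝ × ℝ | p.1 ∈ Icc (0:ℝ) 1}ᶜ = (Icc (0:ℝ) 1)ᶜ ×ˢ (univ : Set ℝ) := by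
        ext p; simp
      rw [hset, Measure.prod_prod, S.B_supp i j, zero_mul]
    exact mem_ae_iff.2 hnull0
  have hsndae : ∀ j : Fin 2, ∀ {P : ℝ → Prop},
      (∀ᵐ s ∂(volume.restrict (Icc (0:ℝ) 1)), P s) →
      ∀ᵐ p ∂((S.B i j).prod (volume.restrict (Icc (0:ℝ) 1))), P p.2 := by
    intro j P hP
    haveI := S.B_fin i j
    exact Measure.quasiMeasurePreserving_snd.ae hP
  have hprodae : ∀ j : Fin 2, ∀ᵐ p ∂((S.B i j).prod (volume.restrict (Icc (0:ℝ) 1))),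
      S.k i p.1 p.2 ≤ Φ0 p.2 := by
    intro j
    haveI := S.B_fin i j
    have hNm : MeasurableSet {p : ℝ × ℝ | p.1 ∈ Icc (0:ℝ) 1 ∧ Φ0 p.2 < S.k i p.1 p.2} :=
      (measurable_fst measurableSet_Icc).inter
        (measurableSet_lt (hΦ0m.measurable.comp measurable_snd) (S.k_meas i))
    have hnull : ((S.B i j).prod (volume.restrict (Icc (0:ℝ) 1)))
        {p : ℝ × ℝ | p.1 ∈ Icc (0:ℝ) 1 ∧ Φ0 p.2 < S.k i p.1 p.2} = 0 := by
      rw [Measure.measure_prod_null hNm]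
      filter_upwards [S.Bae i j] with t ht
      have h0 : (volume.restrict (Icc (0:ℝ) 1)) {s | ¬ S.k i t s ≤ Φ0 s} = 0 :=
        ae_iff.1 (hkΦ0 t ht)
      refine measure_mono_null ?_ h0
      intro s hs
      simp only [mem_preimage, mem_setOf_eq] at hs ⊢
      exact not_le.2 hs.2
    have hcompl : ∀ᵐ p ∂((S.B i j).prod (volume.restrict (Icc (0:ℝ) 1))),
        ¬ (p.1 ∈ Icc (0:ℝ) 1 ∧ Φ0 p.2 < S.k i p.1 p.2) := by
      rw [ae_iff]
      refine measure_mono_null (fun p hp => ?_) hnull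
      simpa [not_not, and_assoc] using hp
    filter_upwards [hcompl, hfstIcc j] with p h1 h2
    by_contra hlt
    exact h1 ⟨h2, not_le.1 hlt⟩
  have hksnd0 : ∀ j : Fin 2, ∀ᵐ p ∂((S.B i j).prod (volume.restrict (Icc (0:ℝ) 1))),
      0 ≤ S.k i p.1 p.2 := by
    intro j
    filter_upwards [hfstIcc j, hsndae j hsIcc] with p h1 h2
    exact S.k_nonneg i _ h1 _ h2
  have hdomprod : ∀ j : Fin 2, Integrable (fun p : ℝ × ℝ => S.g i p.2 * Φ0 p.2 * Cφ)
      ((S.B i j).prod (volume.restrict (Icc (0:ℝ) 1))) := by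
    intro j
    haveI := S.B_fin i j
    have h := (integrable_const (1:ℝ) (μ := S.B i j)).mul_prod (hgΦ0.mul_const Cφ)
    simpa using h
  have hdomprod1 : ∀ j : Fin 2, Integrable (fun p : ℝ × ℝ => S.g i p.2 * Φ0 p.2)
      ((S.B i j).prod (volume.restrict (Icc (0:ℝ) 1))) := by
    intro j
    haveI := S.B_fin i j
    have h := (integrable_const (1:ℝ) (μ := S.B i j)).mul_prod hgΦ0
    simpa using h
  have hprodint : ∀ j : Fin 2, Integrable
      (Function.uncurry fun t s => S.k i t s * S.g i s * S.f i s (u s) (v s))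
      ((S.B i j).prod (volume.restrict (Icc (0:ℝ) 1))) := by
    intro j
    haveI := S.B_fin i j
    refine Integrable.mono' (hdomprod j) ?_ ?_
    · exact ((S.k_meas i).aestronglyMeasurable.mul
        (((S.g_meas i).comp measurable_snd).aestronglyMeasurable)).mul
        (hfc_aesm.comp_quasiMeasurePreserving Measure.quasiMeasurePreserving_snd)
    · filter_upwards [hprodae j, hksnd0 j, hsndae j hg0, hsndae j hfcCφ,
        hsndae j hfc0ae] with p hkΦ hk0 hg hfC hf0
      simp only [Function.uncurry]
      rw [Real.norm_eq_abs, abs_of_nonneg (by positivity)]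
      calc S.k i p.1 p.2 * S.g i p.2 * S.f i p.2 (u p.2) (v p.2)
          ≤ (Φ0 p.2 * S.g i p.2) * Cφ := by
            refine mul_le_mul (mul_le_mul_of_nonneg_right hkΦ hg) hfC hf0
              (mul_nonneg (hk0.trans hkΦ) hg)
        _ = S.g i p.2 * Φ0 p.2 * Cφ := by ring
  have hprodint1 : ∀ j : Fin 2, Integrable
      (Function.uncurry fun t s => S.k i t s * S.g i s)
      ((S.B i j).prod (volume.restrict (Icc (0:ℝ) 1))) := by
    intro j
    haveI := S.B_fin i j
    refine Integrable.mono' (hdomprod1 j) ?_ ?_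
    · exact (S.k_meas i).aestronglyMeasurable.mul
        (((S.g_meas i).comp measurable_snd).aestronglyMeasurable)
    · filter_upwards [hprodae j, hksnd0 j, hsndae j hg0] with p hkΦ hk0 hg
      simp only [Function.uncurry]
      rw [Real.norm_eq_abs, abs_of_nonneg (by positivity)]
      exact (mul_le_mul_of_nonneg_right hkΦ hg).trans_eq (mul_comm _ _)
  -- Fubini
  have hKKform : ∀ j : Fin 2, ∫ t, S.F i u v t ∂(S.B i j)
      = ∫ s in Icc (0:ℝ) 1, S.KK i j s * (S.g i s * S.f i s (u s) (v s)) := by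
    intro j
    haveI := S.B_fin i j
    have hswap := integral_integral_swap (hprodint j)
    have hFdef : (fun t => S.F i u v t)
        = fun t => ∫ s, S.k i t s * S.g i s * S.f i s (u s) (v s)
            ∂(volume.restrict (Icc (0:ℝ) 1)) := rfl
    rw [hFdef, hswap]
    refine integral_congr_ae (Eventually.of_forall fun s => ?_)
    simp_rw [mul_assoc]
    rw [integral_mul_const]
    rfl
  have hKKg_int : ∀ j : Fin 2, IntegrableOn
      (fun s => S.KK i j s * (S.g i s * S.f i s (u s) (v s))) (Icc (0:ℝ) 1) := by
    intro j
    haveI := S.B_fin i j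
    refine ((hprodint j).integral_prod_right).congr (Eventually.of_forall fun s => ?_)
    simp only [Function.uncurry]
    simp_rw [mul_assoc]
    rw [integral_mul_const]
    rfl
  have hKKg1_int : ∀ j : Fin 2, IntegrableOn
      (fun s => S.KK i j s * S.g i s) (Icc (0:ℝ) 1) := by
    intro j
    haveI := S.B_fin i j
    refine ((hprodint1 j).integral_prod_right).congr (Eventually.of_forall fun s => ?_)
    simp only [Function.uncurry]
    rw [integral_mul_const]
    rfl
  have hKK0 : ∀ j : Fin 2, ∀ᵐ s ∂(volume.restrict (Icc (0:ℝ) 1)), 0 ≤ S.KK i j s := by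
    intro j
    haveI := S.B_fin i j
    filter_upwards [hsIcc] with s hs
    refine integral_nonneg_of_ae ?_
    filter_upwards [S.Bae i j] with t ht
    exact S.k_nonneg i t ht s hs
  -- lower bound for ∫ F dB_j
  have hC1 : ∀ j : Fin 2, (S.fInf i ρ * ρ) * ∫ s in Icc (S.a i) (S.b i), S.KK i j s * S.g i s
      ≤ ∫ t, S.F i u v t ∂(S.B i j) := by
    intro j
    rw [hKKform j]
    have hstep1 : ∫ s in Icc (S.a i) (S.b i), S.KK i j s * (S.g i s * S.f i s (u s) (v s))
        ≤ ∫ s in Icc (0:ℝ) 1, S.KK i j s * (S.g i s * S.f i s (u s) (v s)) := by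
      refine setIntegral_mono_set (hKKg_int j) ?_ (HasSubset.Subset.eventuallyLE (S.hsub i))
      filter_upwards [hKK0 j, hg0, hfc0ae] with s h1 h2 h3
      positivity
    refine le_trans ?_ hstep1
    have hae : ∀ᵐ x ∂(volume : Measure ℝ), x ∈ Icc (0:ℝ) 1 →
        (0 ≤ S.KK i j x ∧ 0 ≤ S.g i x) := by
      refine (ae_restrict_iff' measurableSet_Icc).1 ?_
      filter_upwards [hKK0 j, hg0] with s h1 h2 using ⟨h1, h2⟩
    have hstep2 : ∫ s in Icc (S.a i) (S.b i), (S.KK i j s * S.g i s) * (S.fInf i ρ * ρ)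
        ≤ ∫ s in Icc (S.a i) (S.b i), S.KK i j s * (S.g i s * S.f i s (u s) (v s)) := by
      refine setIntegral_mono_on_ae (((hKKg1_int j).mono_set (S.hsub i)).mul_const _)
        ((hKKg_int j).mono_set (S.hsub i)) measurableSet_Icc ?_
      filter_upwards [hae] with x hx hxab
      obtain ⟨h1, h2⟩ := hx (S.hsub i hxab)
      have h3 := hflow x hxab
      calc (S.KK i j x * S.g i x) * (S.fInf i ρ * ρ)
          ≤ (S.KK i j x * S.g i x) * S.f i x (u x) (v x) :=
            mul_le_mul_of_nonneg_left h3 (by positivity)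
        _ = S.KK i j x * (S.g i x * S.f i x (u x) (v x)) := by ring
    refine le_trans ?_ hstep2
    rw [integral_mul_const, mul_comm]
  -- the β system
  have hBeq : ∀ j : Fin 2, ∫ t, w t ∂(S.B i j)
      = S.β i j (S.γ i 0) * A0 + S.β i j (S.γ i 1) * A1
        + ∫ t, S.F i u v t ∂(S.B i j) + μ0 * ((S.B i j) univ).toReal := by
    intro j
    haveI := S.B_fin i j
    have hγ0int : Integrable (S.γ i 0) (S.B i j) :=
      IPaux.integrable_of_contOn (S.B_supp i j) (S.γ_cont i 0)
    have hγ1int : Integrable (S.γ i 1) (S.B i j) :=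
      IPaux.integrable_of_contOn (S.B_supp i j) (S.γ_cont i 1)
    have hFB : Integrable (S.F i u v) (S.B i j) := by
      refine ((hprodint j).integral_prod_left).congr (Eventually.of_forall fun t => ?_)
      rfl
    have hcong : ∫ t, w t ∂(S.B i j)
        = ∫ t, (S.γ i 0 t * A0 + S.γ i 1 t * A1 + S.F i u v t + μ0) ∂(S.B i j) := by
      refine integral_congr_ae ?_
      filter_upwards [S.Bae i j] with t ht using heq t ht
    have hint01 : Integrable (fun t => S.γ i 0 t * A0 + S.γ i 1 t * A1) (S.B i j) :=
      (hγ0int.mul_const A0).add (hγ1int.mul_const A1)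
    have hint1 : Integrable (fun t => S.γ i 0 t * A0 + S.γ i 1 t * A1 + S.F i u v t)
        (S.B i j) := hint01.add hFB
    rw [hcong, integral_add hint1 (integrable_const μ0), integral_add hint01 hFB,
      integral_add (hγ0int.mul_const A0) (hγ1int.mul_const A1),
      integral_mul_const, integral_mul_const, integral_const]
    simp only [smul_eq_mul, Setup.β, Measure.real]
    ring
  have hXs : ∀ j : Fin 2, S.β i j (S.γ i 0) * A0 + S.β i j (S.γ i 1) * A1
      + (S.fInf i ρ * ρ) * ∫ s in Icc (S.a i) (S.b i), S.KK i j s * S.g i s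
      ≤ ∫ t, w t ∂(S.B i j) := by
    intro j
    haveI := S.B_fin i j
    rw [hBeq j]
    have h1 := hC1 j
    have h2 : 0 ≤ μ0 * ((S.B i j) univ).toReal := mul_nonneg hμ0 ENNReal.toReal_nonneg
    linarith
  -- determinants
  have he00 := S.βγ_nonneg i 0 0
  have he01 := S.βγ_nonneg i 0 1
  have he10 := S.βγ_nonneg i 1 0
  have he11 := S.βγ_nonneg i 1 1
  have ha0 := S.h1_nonneg i 0
  have hb1 := S.h1_nonneg i 1
  have hE0 : S.h2 i 0 * S.β i 0 (S.γ i 0) < 1 := S.hβγ i 0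
  have hE1 : S.h2 i 1 * S.β i 1 (S.γ i 1) < 1 := S.hβγ i 1
  have h10 := S.h1_le_h2 i 0
  have h11 := S.h1_le_h2 i 1
  have hd1 : 0 < 1 - S.h1 i 0 * S.β i 0 (S.γ i 0) := by
    nlinarith [mul_le_mul_of_nonneg_right h10 he00]
  have hd2 : 0 < 1 - S.h1 i 1 * S.β i 1 (S.γ i 1) := by
    nlinarith [mul_le_mul_of_nonneg_right h11 he11]
  have hD : 0 < (1 - S.h2 i 0 * S.β i 0 (S.γ i 0)) * (1 - S.h2 i 1 * S.β i 1 (S.γ i 1))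
      - S.h2 i 0 * S.h2 i 1 * S.β i 0 (S.γ i 1) * S.β i 1 (S.γ i 0) := S.D_pos i
  have hDlpos : 0 < S.Dl i := by
    have hb0' : 1 - S.h2 i 0 * S.β i 0 (S.γ i 0) ≤ 1 - S.h1 i 0 * S.β i 0 (S.γ i 0) := by
      nlinarith [mul_le_mul_of_nonneg_right h10 he00]
    have hb1' : 1 - S.h2 i 1 * S.β i 1 (S.γ i 1) ≤ 1 - S.h1 i 1 * S.β i 1 (S.γ i 1) := by
      nlinarith [mul_le_mul_of_nonneg_right h11 he11]
    have hq : (1 - S.h2 i 0 * S.β i 0 (S.γ i 0)) * (1 - S.h2 i 1 * S.β i 1 (S.γ i 1))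
        ≤ (1 - S.h1 i 0 * S.β i 0 (S.γ i 0)) * (1 - S.h1 i 1 * S.β i 1 (S.γ i 1)) := by
      refine mul_le_mul hb0' hb1' (by nlinarith) (by linarith)
    have hw' : S.h1 i 0 * S.h1 i 1 * S.β i 0 (S.γ i 1) * S.β i 1 (S.γ i 0)
        ≤ S.h2 i 0 * S.h2 i 1 * S.β i 0 (S.γ i 1) * S.β i 1 (S.γ i 0) := by
      have := mul_le_mul h10 h11 hb1 (ha0.trans h10)
      nlinarith [mul_nonneg he01 he10]
    simp only [Setup.Dl]
    linarith
  -- nonnegativity of the P's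
  have hfρ : 0 ≤ S.fInf i ρ * ρ := mul_nonneg hfinf hρ.le
  -- the linear system bound
  have halg := IPaux.system_bound ha0 hb1 he01 he10 (hXs 0) (hXs 1) hA0 hA1 hd1 hd2
    (by simp only [Setup.Dl]; try ring) hDlpos
  -- lower bound of w on [a,b]
  have hMlow : ∀ t ∈ Icc (S.a i) (S.b i),
      S.cγ i 0 * supN (S.γ i 0) * A0 + S.cγ i 1 * supN (S.γ i 1) * A1
        + (S.fInf i ρ * ρ) * S.MInv i ≤ w t := by
    intro t ht
    have htI : t ∈ Icc (0:ℝ) 1 := S.hsub i ht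
    rw [heq t htI]
    have hγ0b : S.cγ i 0 * supN (S.γ i 0) * A0 ≤ S.γ i 0 t * A0 :=
      mul_le_mul_of_nonneg_right (S.γ_ge i 0 t ht) hA0n
    have hγ1b : S.cγ i 1 * supN (S.γ i 1) * A1 ≤ S.γ i 1 t * A1 :=
      mul_le_mul_of_nonneg_right (S.γ_ge i 1 t ht) hA1n
    have hFlow : (S.fInf i ρ * ρ) * S.MInv i ≤ S.F i u v t := by
      have hst1 : ∫ s in Icc (S.a i) (S.b i), S.k i t s * S.g i s * S.f i s (u s) (v s)
          ≤ S.F i u v t := by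
        refine setIntegral_mono_set (hFint t htI) ?_
          (HasSubset.Subset.eventuallyLE (S.hsub i))
        filter_upwards [hg0, hfc0ae, hsIcc] with s h1 h2 hs
        have := S.k_nonneg i t htI s hs
        positivity
      have hae : ∀ᵐ x ∂(volume : Measure ℝ), x ∈ Icc (0:ℝ) 1 →
          (0 ≤ S.g i x ∧ 0 ≤ S.f i x (u x) (v x)) := by
        refine (ae_restrict_iff' measurableSet_Icc).1 ?_
        filter_upwards [hg0, hfc0ae] with s h1 h2 using ⟨h1, h2⟩
      have hst2 : ∫ s in Icc (S.a i) (S.b i), (S.k i t s * S.g i s) * (S.fInf i ρ * ρ)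
          ≤ ∫ s in Icc (S.a i) (S.b i), S.k i t s * S.g i s * S.f i s (u s) (v s) := by
        refine setIntegral_mono_on_ae ((IntegrableOn.mono_set (hkgint t htI) (S.hsub i)).mul_const _)
          (IntegrableOn.mono_set (hFint t htI) (S.hsub i)) measurableSet_Icc ?_
        filter_upwards [hae] with x hx hxab
        obtain ⟨h1, h2⟩ := hx (S.hsub i hxab)
        have h3 := hflow x hxab
        have hk0 : 0 ≤ S.k i t x := S.k_nonneg i t htI x (S.hsub i hxab)
        exact mul_le_mul_of_nonneg_left h3 (by positivity)
      have hMInv : S.MInv i ≤ ∫ s in Icc (S.a i) (S.b i), S.k i t s * S.g i s := by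
        refine csInf_le ⟨0, ?_⟩ ⟨t, ht, rfl⟩
        rintro x ⟨t', ht', rfl⟩
        refine integral_nonneg_of_ae ?_
        have hg' : ∀ᵐ s ∂(volume.restrict (Icc (S.a i) (S.b i))), 0 ≤ S.g i s :=
          ae_restrict_of_ae_restrict_of_subset (S.hsub i) hg0
        filter_upwards [hg', ae_restrict_mem measurableSet_Icc] with s hs hsab
        exact mul_nonneg (S.k_nonneg i t' (S.hsub i ht') s (S.hsub i hsab)) hs
      calc (S.fInf i ρ * ρ) * S.MInv i
          ≤ (S.fInf i ρ * ρ) * ∫ s in Icc (S.a i) (S.b i), S.k i t s * S.g i s :=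
            mul_le_mul_of_nonneg_left hMInv hfρ
        _ = ∫ s in Icc (S.a i) (S.b i), (S.k i t s * S.g i s) * (S.fInf i ρ * ρ) := by
            rw [integral_mul_const]; ring
        _ ≤ _ := hst2.trans hst1
    linarith
  have hc0 : 0 ≤ S.cγ i 0 * supN (S.γ i 0) := mul_nonneg (S.cγ_mem i 0).1.le (supN_nonneg _)
  have hc1 : 0 ≤ S.cγ i 1 * supN (S.γ i 1) := mul_nonneg (S.cγ_mem i 1).1.le (supN_nonneg _)
  have hψ : (S.fInf i ρ * S.Ψ i) * ρ
      = S.cγ i 0 * supN (S.γ i 0) * (S.h1 i 0 * ((1 - S.h1 i 1 * S.β i 1 (S.γ i 1))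
          * ((S.fInf i ρ * ρ) * ∫ s in Icc (S.a i) (S.b i), S.KK i 0 s * S.g i s)
          + S.h1 i 1 * S.β i 0 (S.γ i 1)
          * ((S.fInf i ρ * ρ) * ∫ s in Icc (S.a i) (S.b i), S.KK i 1 s * S.g i s)) / S.Dl i)
      + S.cγ i 1 * supN (S.γ i 1) * (S.h1 i 1 * (S.h1 i 0 * S.β i 1 (S.γ i 0)
          * ((S.fInf i ρ * ρ) * ∫ s in Icc (S.a i) (S.b i), S.KK i 0 s * S.g i s)
          + (1 - S.h1 i 0 * S.β i 0 (S.γ i 0))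
          * ((S.fInf i ρ * ρ) * ∫ s in Icc (S.a i) (S.b i), S.KK i 1 s * S.g i s)) / S.Dl i)
      + (S.fInf i ρ * ρ) * S.MInv i := by
    simp only [Setup.Ψ]
    ring
  refine lt_of_lt_of_le ?_ (le_minOn (S.hab i) hMlow)
  calc ρ = 1 * ρ := (one_mul ρ).symm
    _ < (S.fInf i ρ * S.Ψ i) * ρ := mul_lt_mul_of_pos_right hI hρ
    _ ≤ S.cγ i 0 * supN (S.γ i 0) * A0 + S.cγ i 1 * supN (S.γ i 1) * A1
        + (S.fInf i ρ * ρ) * S.MInv i := by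
      rw [hψ]
      have hb0 := mul_le_mul_of_nonneg_left halg.1 hc0
      have hb1'' := mul_le_mul_of_nonneg_left halg.2 hc1
      linarith


end Core

/-- Under condition `(I⁰_ρ)`, for every `(u,v)` in the boundary of `V_ρ` relative to `K`
(i.e. `(u,v) ∈ K` with `min_{[a₁,b₁]} u ≤ ρ`, `min_{[a₂,b₂]} v ≤ ρ` and at least one of
these minima equal to `ρ`) and every `μ ≥ 0`, one has `(u,v) ≠ T(u,v) + μ(e,e)` where
`e ≡ 1`. -/
theorem no_translate_fixed_point_on_boundary_Vrho (S : Setup) (ρ : ℝ) (hρ : 0 < ρ)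
    (hI0 : S.CondI0 ρ) (u v : ℝ → ℝ) (huv : S.inK u v)
    (hu_le : minOnIcc u (S.a 0) (S.b 0) ≤ ρ) (hv_le : minOnIcc v (S.a 1) (S.b 1) ≤ ρ)
    (hbd : minOnIcc u (S.a 0) (S.b 0) = ρ ∨ minOnIcc v (S.a 1) (S.b 1) = ρ)
    (μ : ℝ) (hμ : 0 ≤ μ) :
    ¬ ∀ t ∈ Icc (0:ℝ) 1, u t = S.T1 u v t + μ ∧ v t = S.T2 u v t + μ := by
  intro h
  obtain ⟨hu_cont, hv_cont, hu0, hv0, hKu, hKv⟩ := huv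
  have hcc := S.cc_pos
  have hct0 := S.ctilde_pos 0
  have hct1 := S.ctilde_pos 1
  have hub : ∀ s ∈ Icc (0:ℝ) 1, u s ≤ ρ / S.cc := by
    intro s hs
    have h1 : u s ≤ supN u := le_supN hu_cont hs
    have h2 : S.ctilde 0 * supN u ≤ ρ := hKu.trans hu_le
    have h3 : supN u ≤ ρ / S.ctilde 0 := by
      rw [le_div_iff₀ hct0]; nlinarith
    have h4 : ρ / S.ctilde 0 ≤ ρ / S.cc :=
      div_le_div_of_nonneg_left hρ.le hcc (S.cc_le_ctilde 0)
    linarith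
  have hvb : ∀ s ∈ Icc (0:ℝ) 1, v s ≤ ρ / S.cc := by
    intro s hs
    have h1 : v s ≤ supN v := le_supN hv_cont hs
    have h2 : S.ctilde 1 * supN v ≤ ρ := hKv.trans hv_le
    have h3 : supN v ≤ ρ / S.ctilde 1 := by
      rw [le_div_iff₀ hct1]; nlinarith
    have h4 : ρ / S.ctilde 1 ≤ ρ / S.cc :=
      div_le_div_of_nonneg_left hρ.le hcc (S.cc_le_ctilde 1)
    linarith
  rcases hbd with hmin | hmin
  · -- the minimum of u equals ρ : use i = 0
    have hβ00 : (0:ℝ) ≤ S.β 0 0 u := S.β_nonneg 0 0 hu0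
    have hβ01 : (0:ℝ) ≤ S.β 0 1 u := S.β_nonneg 0 1 hu0
    have hδ0 : (0:ℝ) ≤ S.δ 0 0 v := S.δ_nonneg 0 0 hv0
    have hδ1 : (0:ℝ) ≤ S.δ 0 1 v := S.δ_nonneg 0 1 hv0
    have hA0 : S.h1 0 0 * (∫ t, u t ∂(S.B 0 0))
        ≤ S.H 0 0 (S.β 0 0 u) + S.L 0 0 (S.δ 0 0 v) := by
      have h1 := S.H_bound_lower 0 0 _ hβ00
      have h2 := S.L_nonneg 0 0 _ hδ0
      have hd : S.β 0 0 u = ∫ t, u t ∂(S.B 0 0) := rfl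
      rw [← hd]; linarith
    have hA1 : S.h1 0 1 * (∫ t, u t ∂(S.B 0 1))
        ≤ S.H 0 1 (S.β 0 1 u) + S.L 0 1 (S.δ 0 1 v) := by
      have h1 := S.H_bound_lower 0 1 _ hβ01
      have h2 := S.L_nonneg 0 1 _ hδ1
      have hd : S.β 0 1 u = ∫ t, u t ∂(S.B 0 1) := rfl
      rw [← hd]; linarith
    have hA0n : (0:ℝ) ≤ S.H 0 0 (S.β 0 0 u) + S.L 0 0 (S.δ 0 0 v) :=
      add_nonneg (S.H_nonneg 0 0 _ hβ00) (S.L_nonneg 0 0 _ hδ0)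
    have hA1n : (0:ℝ) ≤ S.H 0 1 (S.β 0 1 u) + S.L 0 1 (S.δ 0 1 v) :=
      add_nonneg (S.H_nonneg 0 1 _ hβ01) (S.L_nonneg 0 1 _ hδ1)
    have heq0 : ∀ t ∈ Icc (0:ℝ) 1, u t
        = S.γ 0 0 t * (S.H 0 0 (S.β 0 0 u) + S.L 0 0 (S.δ 0 0 v))
          + S.γ 0 1 t * (S.H 0 1 (S.β 0 1 u) + S.L 0 1 (S.δ 0 1 v)) + S.F 0 u v t + μ :=
      fun t ht => (h t ht).1
    have hbdd : ∀ x ∈ {x | ∃ t ∈ Icc (S.a 0) (S.b 0), ∃ u' ∈ Icc ρ (ρ / S.cc),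
        ∃ v' ∈ Icc (0:ℝ) (ρ / S.cc), x = S.f 0 t u' v' / ρ}, (0:ℝ) ≤ x := by
      rintro x ⟨t, ht, u', hu', v', hv', rfl⟩
      exact div_nonneg (S.f_nonneg 0 t (S.hsub 0 ht) u' (hρ.le.trans hu'.1) v' hv'.1) hρ.le
    have hfinfeq : S.fInf 0 ρ = S.fInf1 ρ := by simp [Setup.fInf]
    have hflow : ∀ s ∈ Icc (S.a 0) (S.b 0), S.fInf 0 ρ * ρ ≤ S.f 0 s (u s) (v s) := by
      intro s hs
      have hsI : s ∈ Icc (0:ℝ) 1 := S.hsub 0 hs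
      have hu1 : ρ ≤ u s := by rw [← hmin]; exact minOn_le (hu_cont.mono (S.hsub 0)) hs
      have h5 : S.fInf 0 ρ ≤ S.f 0 s (u s) (v s) / ρ := by
        rw [hfinfeq]
        exact csInf_le ⟨0, hbdd⟩ ⟨s, hs, u s, ⟨hu1, hub s hsI⟩, v s, ⟨hv0 s hsI, hvb s hsI⟩, rfl⟩
      calc S.fInf 0 ρ * ρ ≤ (S.f 0 s (u s) (v s) / ρ) * ρ :=
            mul_le_mul_of_nonneg_right h5 hρ.le
        _ = S.f 0 s (u s) (v s) := div_mul_cancel₀ _ hρ.ne'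
    have hfinf : 0 ≤ S.fInf 0 ρ := by
      rw [hfinfeq]; exact Real.sInf_nonneg hbdd
    have hcore := S.core hρ hμ 0 u v u _ _ hu_cont hv_cont hu0 hv0 hub hvb
      hA0 hA1 hA0n hA1n heq0 hflow hfinf (hI0 0)
    rw [hmin] at hcore
    exact lt_irrefl ρ hcore
  · -- the minimum of v equals ρ : use i = 1
    have hβ00 : (0:ℝ) ≤ S.β 1 0 v := S.β_nonneg 1 0 hv0
    have hβ01 : (0:ℝ) ≤ S.β 1 1 v := S.β_nonneg 1 1 hv0
    have hδ0 : (0:ℝ) ≤ S.δ 1 0 u := S.δ_nonneg 1 0 hu0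
    have hδ1 : (0:ℝ) ≤ S.δ 1 1 u := S.δ_nonneg 1 1 hu0
    have hA0 : S.h1 1 0 * (∫ t, v t ∂(S.B 1 0))
        ≤ S.L 1 0 (S.δ 1 0 u) + S.H 1 0 (S.β 1 0 v) := by
      have h1 := S.H_bound_lower 1 0 _ hβ00
      have h2 := S.L_nonneg 1 0 _ hδ0
      have hd : S.β 1 0 v = ∫ t, v t ∂(S.B 1 0) := rfl
      rw [← hd]; linarith
    have hA1 : S.h1 1 1 * (∫ t, v t ∂(S.B 1 1))
        ≤ S.L 1 1 (S.δ 1 1 u) + S.H 1 1 (S.β 1 1 v) := by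
      have h1 := S.H_bound_lower 1 1 _ hβ01
      have h2 := S.L_nonneg 1 1 _ hδ1
      have hd : S.β 1 1 v = ∫ t, v t ∂(S.B 1 1) := rfl
      rw [← hd]; linarith
    have hA0n : (0:ℝ) ≤ S.L 1 0 (S.δ 1 0 u) + S.H 1 0 (S.β 1 0 v) :=
      add_nonneg (S.L_nonneg 1 0 _ hδ0) (S.H_nonneg 1 0 _ hβ00)
    have hA1n : (0:ℝ) ≤ S.L 1 1 (S.δ 1 1 u) + S.H 1 1 (S.β 1 1 v) :=
      add_nonneg (S.L_nonneg 1 1 _ hδ1) (S.H_nonneg 1 1 _ hβ01)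
    have heq0 : ∀ t ∈ Icc (0:ℝ) 1, v t
        = S.γ 1 0 t * (S.L 1 0 (S.δ 1 0 u) + S.H 1 0 (S.β 1 0 v))
          + S.γ 1 1 t * (S.L 1 1 (S.δ 1 1 u) + S.H 1 1 (S.β 1 1 v)) + S.F 1 u v t + μ :=
      fun t ht => (h t ht).2
    have hbdd : ∀ x ∈ {x | ∃ t ∈ Icc (S.a 1) (S.b 1), ∃ u' ∈ Icc (0:ℝ) (ρ / S.cc),
        ∃ v' ∈ Icc ρ (ρ / S.cc), x = S.f 1 t u' v' / ρ}, (0:ℝ) ≤ x := by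
      rintro x ⟨t, ht, u', hu', v', hv', rfl⟩
      exact div_nonneg (S.f_nonneg 1 t (S.hsub 1 ht) u' hu'.1 v' (hρ.le.trans hv'.1)) hρ.le
    have hfinfeq : S.fInf 1 ρ = S.fInf2 ρ := by simp [Setup.fInf]
    have hflow : ∀ s ∈ Icc (S.a 1) (S.b 1), S.fInf 1 ρ * ρ ≤ S.f 1 s (u s) (v s) := by
      intro s hs
      have hsI : s ∈ Icc (0:ℝ) 1 := S.hsub 1 hs
      have hv1 : ρ ≤ v s := by rw [← hmin]; exact minOn_le (hv_cont.mono (S.hsub 1)) hs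
      have h5 : S.fInf 1 ρ ≤ S.f 1 s (u s) (v s) / ρ := by
        rw [hfinfeq]
        exact csInf_le ⟨0, hbdd⟩ ⟨s, hs, u s, ⟨hu0 s hsI, hub s hsI⟩, v s, ⟨hv1, hvb s hsI⟩, rfl⟩
      calc S.fInf 1 ρ * ρ ≤ (S.f 1 s (u s) (v s) / ρ) * ρ :=
            mul_le_mul_of_nonneg_right h5 hρ.le
        _ = S.f 1 s (u s) (v s) := div_mul_cancel₀ _ hρ.ne'
    have hfinf : 0 ≤ S.fInf 1 ρ := by
      rw [hfinfeq]; exact Real.sInf_nonneg hbdd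
    have hcore := S.core hρ hμ 1 u v v _ _ hu_cont hv_cont hu0 hv0 hub hvb
      hA0 hA1 hA0n hA1n heq0 hflow hfinf (hI0 1)
    rw [hmin] at hcore
    exact lt_irrefl ρ hcore
end
end

section
/- Under the general setup, the operator T maps the cone K into itself: for every (u,v) ∈ K, the pair T(u,v) = (T₁(u,v), T₂(u,v)) satisfies, for each i = 1,2, T_i(u,v)(t) ≥ 0 for all t ∈ [0,1] and min_{t∈[a_i,b_i]} T_i(u,v)(t) ≥ c̃_i ‖T_i(u,v)‖∞. -/
open MeasureTheory Set Filter

noncomputable section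

section AuxConeProof

open MeasureTheory Filter Topology
open scoped ENNReal NNReal

private lemma measurable_comp_simpleFunc' {F : ℝ → ℝ × ℝ → ℝ}
    (hF : ∀ c, Measurable fun t => F t c) (p : SimpleFunc ℝ (ℝ × ℝ)) :
    Measurable fun t => F t (p t) := by
  have h : (fun t => F t (p t))
      = fun t => ∑ c ∈ p.range, (p ⁻¹' {c}).indicator (fun t => F t c) t := by
    funext t
    rw [Finset.sum_eq_single (p t)]
    · exact (Set.indicator_of_mem rfl _).symm
    · intro c _ hne
      apply Set.indicator_of_notMem
      simp only [Set.mem_preimage, Set.mem_singleton_iff]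
      exact fun h => hne h.symm
    · intro h
      exact absurd (p.mem_range_self t) h
  rw [h]
  exact Finset.measurable_sum _ fun c _ =>
    (hF c).indicator (p.measurable (measurableSet_singleton c))

private lemma aesm_f (S : Setup) (i : Fin 2) {u v : ℝ → ℝ}
    (hu : ContinuousOn u (Icc (0:ℝ) 1)) (hv : ContinuousOn v (Icc (0:ℝ) 1))
    (hu0 : ∀ t ∈ Icc (0:ℝ) 1, 0 ≤ u t) (hv0 : ∀ t ∈ Icc (0:ℝ) 1, 0 ≤ v t) :
    AEStronglyMeasurable (fun s => S.f i s (u s) (v s))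
      (volume.restrict (Icc (0:ℝ) 1)) := by
  set μ := volume.restrict (Icc (0:ℝ) 1) with hμ
  have hum : AEMeasurable u μ := hu.aemeasurable measurableSet_Icc
  have hvm : AEMeasurable v μ := hv.aemeasurable measurableSet_Icc
  have hw : Measurable (fun t => (hum.mk u t, hvm.mk v t)) :=
    hum.measurable_mk.prodMk hvm.measurable_mk
  have hscl : IsClosed ((Ici (0:ℝ)) ×ˢ (Ici (0:ℝ))) := isClosed_Ici.prod isClosed_Ici
  have h₀ : ((0:ℝ), (0:ℝ)) ∈ (Ici (0:ℝ)) ×ˢ (Ici (0:ℝ)) :=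
    Set.mem_prod.2 ⟨le_refl (0:ℝ), le_refl (0:ℝ)⟩
  set p := fun n => SimpleFunc.approxOn _ hw _ _ h₀ n with hp
  have hmeas : ∀ n, AEStronglyMeasurable (fun t => S.f i t ((p n) t).1 ((p n) t).2) μ :=
    fun n => (measurable_comp_simpleFunc' (F := fun t c => S.f i t c.1 c.2)
      (fun c => S.f_meas i c.1 c.2) (p n)).aestronglyMeasurable
  refine aestronglyMeasurable_of_tendsto_ae atTop hmeas ?_
  filter_upwards [hum.ae_eq_mk, hvm.ae_eq_mk, S.f_cont i,
    ae_restrict_mem measurableSet_Icc] with t htu htv hcont ht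
  have hmem : (hum.mk u t, hvm.mk v t) ∈ (Ici (0:ℝ)) ×ˢ (Ici (0:ℝ)) :=
    ⟨by rw [← htu]; exact hu0 t ht, by rw [← htv]; exact hv0 t ht⟩
  have htend : Tendsto (fun n => p n t) atTop (𝓝 (hum.mk u t, hvm.mk v t)) :=
    SimpleFunc.tendsto_approxOn hw h₀ (by rw [hscl.closure_eq]; exact hmem)
  have hwithin : Tendsto (fun n => p n t) atTop
      (𝓝[(Ici (0:ℝ)) ×ˢ (Ici (0:ℝ))] (hum.mk u t, hvm.mk v t)) :=
    tendsto_nhdsWithin_of_tendsto_nhds_of_eventually_within _ htend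
      (Eventually.of_forall fun n => SimpleFunc.approxOn_mem hw h₀ n t)
  have hc : ContinuousWithinAt (fun c : ℝ × ℝ => S.f i t c.1 c.2)
      ((Ici (0:ℝ)) ×ˢ (Ici (0:ℝ))) (hum.mk u t, hvm.mk v t) :=
    hcont.continuousWithinAt hmem
  have hfin := hc.tendsto.comp hwithin
  rw [← htu, ← htv] at hfin
  exact hfin

private lemma Phi_nonneg_ae (S : Setup) (i : Fin 2) :
    ∀ᵐ s ∂(volume.restrict (Icc (0:ℝ) 1)), 0 ≤ S.Φ i s := by
  filter_upwards [S.k_le i 0 ⟨le_refl _, zero_le_one⟩,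
    ae_restrict_mem measurableSet_Icc] with s h1 h2
  exact le_trans (S.k_nonneg i 0 ⟨le_refl _, zero_le_one⟩ s h2) h1

private lemma integrable_Phi_g_f (S : Setup) (i : Fin 2) {u v : ℝ → ℝ}
    (hu : ContinuousOn u (Icc (0:ℝ) 1)) (hv : ContinuousOn v (Icc (0:ℝ) 1))
    (hu0 : ∀ t ∈ Icc (0:ℝ) 1, 0 ≤ u t) (hv0 : ∀ t ∈ Icc (0:ℝ) 1, 0 ≤ v t) :
    Integrable (fun s => S.g i s * S.Φ i s * S.f i s (u s) (v s))
      (volume.restrict (Icc (0:ℝ) 1)) := by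
  set μ := volume.restrict (Icc (0:ℝ) 1) with hμ
  obtain ⟨Cu, hCu⟩ := isCompact_Icc.exists_bound_of_continuousOn hu
  obtain ⟨Cv, hCv⟩ := isCompact_Icc.exists_bound_of_continuousOn hv
  set r : ℝ := max 1 (max Cu Cv) with hr
  have hr0 : (0:ℝ) < r := lt_of_lt_of_le zero_lt_one (le_max_left _ _)
  obtain ⟨φ, hφmem, hφbd⟩ := S.f_bdd i r hr0
  set C : ℝ := (eLpNormEssSup φ μ).toReal with hC
  have hCtop : eLpNormEssSup φ μ ≠ ⊤ := by
    have h := hφmem.eLpNorm_lt_top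
    rw [eLpNorm_exponent_top] at h
    exact h.ne
  have hφC : ∀ᵐ s ∂μ, ‖φ s‖ ≤ C := by
    filter_upwards [ae_le_eLpNormEssSup (f := φ) (μ := μ)] with s hs
    have h2 := ENNReal.toReal_mono hCtop hs
    simpa using h2
  have haesm : AEStronglyMeasurable
      (fun s => S.g i s * S.Φ i s * S.f i s (u s) (v s)) μ :=
    (((S.g_meas i).aestronglyMeasurable.mul (S.Φ_mem i).1).mul
      (aesm_f S i hu hv hu0 hv0))
  refine ((S.gΦ_int i).const_mul (max C 0)).mono' haesm ?_
  filter_upwards [ae_restrict_mem measurableSet_Icc, hφbd, hφC,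
    S.g_nonneg i, Phi_nonneg_ae S i] with s hs hφs hφCs hg hΦ
  have humem : u s ∈ Icc (0:ℝ) r :=
    ⟨hu0 s hs, le_trans (le_trans (le_abs_self _) (hCu s hs))
      (le_trans (le_max_left _ _) (le_max_right _ _))⟩
  have hvmem : v s ∈ Icc (0:ℝ) r :=
    ⟨hv0 s hs, le_trans (le_trans (le_abs_self _) (hCv s hs))
      (le_trans (le_max_right _ _) (le_max_right _ _))⟩
  have hf0 : 0 ≤ S.f i s (u s) (v s) :=
    S.f_nonneg i s hs (u s) (hu0 s hs) (v s) (hv0 s hs)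
  have hfC : S.f i s (u s) (v s) ≤ max C 0 :=
    le_trans (hφs (u s) humem (v s) hvmem)
      (le_trans (le_abs_self _) (le_max_of_le_left hφCs))
  have h1 : 0 ≤ S.g i s * S.Φ i s := mul_nonneg hg hΦ
  calc ‖S.g i s * S.Φ i s * S.f i s (u s) (v s)‖
      = S.g i s * S.Φ i s * S.f i s (u s) (v s) := by
        rw [Real.norm_eq_abs, abs_of_nonneg (mul_nonneg h1 hf0)]
    _ ≤ S.g i s * S.Φ i s * max C 0 := mul_le_mul_of_nonneg_left hfC h1
    _ = max C 0 * (S.g i s * S.Φ i s) := by ring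

private lemma integrable_k_g_f (S : Setup) (i : Fin 2) {u v : ℝ → ℝ}
    (hu : ContinuousOn u (Icc (0:ℝ) 1)) (hv : ContinuousOn v (Icc (0:ℝ) 1))
    (hu0 : ∀ t ∈ Icc (0:ℝ) 1, 0 ≤ u t) (hv0 : ∀ t ∈ Icc (0:ℝ) 1, 0 ≤ v t)
    {t : ℝ} (ht : t ∈ Icc (0:ℝ) 1) :
    Integrable (fun s => S.k i t s * S.g i s * S.f i s (u s) (v s))
      (volume.restrict (Icc (0:ℝ) 1)) := by
  have hkm : Measurable fun s => S.k i t s :=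
    (S.k_meas i).comp measurable_prodMk_left
  refine (integrable_Phi_g_f S i hu hv hu0 hv0).mono'
    ((hkm.aestronglyMeasurable.mul (S.g_meas i).aestronglyMeasurable).mul
      (aesm_f S i hu hv hu0 hv0)) ?_
  filter_upwards [ae_restrict_mem measurableSet_Icc, S.k_le i t ht,
    S.g_nonneg i] with s hs hkle hg
  have hf0 : 0 ≤ S.f i s (u s) (v s) :=
    S.f_nonneg i s hs (u s) (hu0 s hs) (v s) (hv0 s hs)
  have hk0 : 0 ≤ S.k i t s := S.k_nonneg i t ht s hs
  calc ‖S.k i t s * S.g i s * S.f i s (u s) (v s)‖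
      = S.k i t s * (S.g i s * S.f i s (u s) (v s)) := by
        rw [Real.norm_eq_abs, abs_of_nonneg (mul_nonneg (mul_nonneg hk0 hg) hf0)]; ring
    _ ≤ S.Φ i s * (S.g i s * S.f i s (u s) (v s)) :=
        mul_le_mul_of_nonneg_right hkle (mul_nonneg hg hf0)
    _ = S.g i s * S.Φ i s * S.f i s (u s) (v s) := by ring

private lemma component_cone (S : Setup) (i : Fin 2) {u v : ℝ → ℝ}
    (hu : ContinuousOn u (Icc (0:ℝ) 1)) (hv : ContinuousOn v (Icc (0:ℝ) 1))
    (hu0 : ∀ t ∈ Icc (0:ℝ) 1, 0 ≤ u t) (hv0 : ∀ t ∈ Icc (0:ℝ) 1, 0 ≤ v t)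
    {A B : ℝ} (hA : 0 ≤ A) (hB : 0 ≤ B) {w : ℝ → ℝ}
    (hw : ∀ t, w t = S.γ i 0 t * A + S.γ i 1 t * B + S.F i u v t) :
    (∀ t ∈ Icc (0:ℝ) 1, 0 ≤ w t) ∧
    S.ctilde i * supN w ≤ minOnIcc w (S.a i) (S.b i) := by
  obtain ⟨ha0, hab, hb1⟩ := S.ab_mem i
  have hsub : Icc (S.a i) (S.b i) ⊆ Icc (0:ℝ) 1 := Icc_subset_Icc ha0 hb1
  -- facts about the constants
  have hc := S.c_mem i
  have hcγ0 := S.cγ_mem i 0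
  have hcγ1 := S.cγ_mem i 1
  have hct0 : 0 ≤ S.ctilde i :=
    le_of_lt (lt_min hc.1 (lt_min hcγ0.1 hcγ1.1))
  have hctc : S.ctilde i ≤ S.c i := min_le_left _ _
  have hctγ0 : S.ctilde i ≤ S.cγ i 0 := le_trans (min_le_right _ _) (min_le_left _ _)
  have hctγ1 : S.ctilde i ≤ S.cγ i 1 := le_trans (min_le_right _ _) (min_le_right _ _)
  -- facts about the γ's
  have hγbdd : ∀ j : Fin 2, BddAbove ((fun t => |S.γ i j t|) '' Icc (0:ℝ) 1) := fun j =>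
    (isCompact_Icc.image_of_continuousOn (S.γ_cont i j).abs).bddAbove
  have hγle : ∀ j : Fin 2, ∀ t ∈ Icc (0:ℝ) 1, S.γ i j t ≤ supN (S.γ i j) := fun j t ht =>
    le_trans (le_abs_self _) (le_csSup (hγbdd j) ⟨t, ht, rfl⟩)
  have hγsup0 : ∀ j : Fin 2, 0 ≤ supN (S.γ i j) := fun j =>
    le_trans (S.γ_nonneg i j 0 ⟨le_refl _, zero_le_one⟩)
      (hγle j 0 ⟨le_refl _, zero_le_one⟩)
  -- the integral bound
  set IΦ : ℝ := ∫ s in Icc (0:ℝ) 1, S.g i s * S.Φ i s * S.f i s (u s) (v s) with hIΦ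
  have hΦint := integrable_Phi_g_f S i hu hv hu0 hv0
  have hΦgf_nonneg : ∀ᵐ s ∂(volume.restrict (Icc (0:ℝ) 1)),
      0 ≤ S.g i s * S.Φ i s * S.f i s (u s) (v s) := by
    filter_upwards [ae_restrict_mem measurableSet_Icc, S.g_nonneg i,
      Phi_nonneg_ae S i] with s hs hg hΦ
    exact mul_nonneg (mul_nonneg hg hΦ)
      (S.f_nonneg i s hs (u s) (hu0 s hs) (v s) (hv0 s hs))
  have hIΦ0 : 0 ≤ IΦ := integral_nonneg_of_ae hΦgf_nonneg
  -- nonnegativity of F and its bounds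
  have hF0 : ∀ t ∈ Icc (0:ℝ) 1, 0 ≤ S.F i u v t := by
    intro t ht
    refine integral_nonneg_of_ae ?_
    filter_upwards [ae_restrict_mem measurableSet_Icc, S.g_nonneg i] with s hs hg
    exact mul_nonneg (mul_nonneg (S.k_nonneg i t ht s hs) hg)
      (S.f_nonneg i s hs (u s) (hu0 s hs) (v s) (hv0 s hs))
  have hFle : ∀ t ∈ Icc (0:ℝ) 1, S.F i u v t ≤ IΦ := by
    intro t ht
    refine integral_mono_of_nonneg ?_ hΦint ?_
    · filter_upwards [ae_restrict_mem measurableSet_Icc, S.g_nonneg i] with s hs hg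
      exact mul_nonneg (mul_nonneg (S.k_nonneg i t ht s hs) hg)
        (S.f_nonneg i s hs (u s) (hu0 s hs) (v s) (hv0 s hs))
    · filter_upwards [ae_restrict_mem measurableSet_Icc, S.k_le i t ht,
        S.g_nonneg i] with s hs hkle hg
      have hf0 : 0 ≤ S.f i s (u s) (v s) :=
        S.f_nonneg i s hs (u s) (hu0 s hs) (v s) (hv0 s hs)
      calc S.k i t s * S.g i s * S.f i s (u s) (v s)
          = S.k i t s * (S.g i s * S.f i s (u s) (v s)) := by ring
        _ ≤ S.Φ i s * (S.g i s * S.f i s (u s) (v s)) :=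
            mul_le_mul_of_nonneg_right hkle (mul_nonneg hg hf0)
        _ = S.g i s * S.Φ i s * S.f i s (u s) (v s) := by ring
  have hFge : ∀ t ∈ Icc (S.a i) (S.b i), S.c i * IΦ ≤ S.F i u v t := by
    intro t ht
    rw [hIΦ, ← integral_const_mul]
    refine integral_mono_of_nonneg ?_ (integrable_k_g_f S i hu hv hu0 hv0 (hsub ht)) ?_
    · filter_upwards [hΦgf_nonneg] with s hs
      exact mul_nonneg hc.1.le hs
    · filter_upwards [ae_restrict_mem measurableSet_Icc, S.k_ge i t ht,
        S.g_nonneg i] with s hs hkge hg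
      have hf0 : 0 ≤ S.f i s (u s) (v s) :=
        S.f_nonneg i s hs (u s) (hu0 s hs) (v s) (hv0 s hs)
      calc S.c i * (S.g i s * S.Φ i s * S.f i s (u s) (v s))
          = (S.c i * S.Φ i s) * (S.g i s * S.f i s (u s) (v s)) := by ring
        _ ≤ S.k i t s * (S.g i s * S.f i s (u s) (v s)) :=
            mul_le_mul_of_nonneg_right hkge (mul_nonneg hg hf0)
        _ = S.k i t s * S.g i s * S.f i s (u s) (v s) := by ring
  -- nonnegativity of w
  have hw0 : ∀ t ∈ Icc (0:ℝ) 1, 0 ≤ w t := by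
    intro t ht
    rw [hw t]
    have := S.γ_nonneg i 0 t ht
    have := S.γ_nonneg i 1 t ht
    have := hF0 t ht
    positivity
  refine ⟨hw0, ?_⟩
  -- upper and lower bounds
  set U : ℝ := supN (S.γ i 0) * A + supN (S.γ i 1) * B + IΦ with hU
  have hupper : ∀ t ∈ Icc (0:ℝ) 1, w t ≤ U := by
    intro t ht
    rw [hw t]
    exact add_le_add (add_le_add (mul_le_mul_of_nonneg_right (hγle 0 t ht) hA)
      (mul_le_mul_of_nonneg_right (hγle 1 t ht) hB)) (hFle t ht)
  have hlower : ∀ t ∈ Icc (S.a i) (S.b i), S.ctilde i * U ≤ w t := by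
    intro t ht
    rw [hw t]
    have h0 : S.ctilde i * supN (S.γ i 0) * A ≤ S.γ i 0 t * A := by
      refine mul_le_mul_of_nonneg_right (le_trans ?_ (S.γ_ge i 0 t ht)) hA
      exact mul_le_mul_of_nonneg_right hctγ0 (hγsup0 0)
    have h1 : S.ctilde i * supN (S.γ i 1) * B ≤ S.γ i 1 t * B := by
      refine mul_le_mul_of_nonneg_right (le_trans ?_ (S.γ_ge i 1 t ht)) hB
      exact mul_le_mul_of_nonneg_right hctγ1 (hγsup0 1)
    have h2 : S.ctilde i * IΦ ≤ S.F i u v t :=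
      le_trans (mul_le_mul_of_nonneg_right hctc hIΦ0) (hFge t ht)
    calc S.ctilde i * U
        = S.ctilde i * supN (S.γ i 0) * A + S.ctilde i * supN (S.γ i 1) * B
          + S.ctilde i * IΦ := by rw [hU]; ring
      _ ≤ S.γ i 0 t * A + S.γ i 1 t * B + S.F i u v t :=
          add_le_add (add_le_add h0 h1) h2
  -- conclude
  have hne : (Icc (S.a i) (S.b i)).Nonempty := nonempty_Icc.2 hab
  have hsupU : supN w ≤ U := by
    refine csSup_le ⟨|w 0|, 0, ⟨le_refl _, zero_le_one⟩, rfl⟩ ?_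
    rintro x ⟨t, ht, rfl⟩
    show |w t| ≤ U
    rw [abs_of_nonneg (hw0 t ht)]
    exact hupper t ht
  have hminU : S.ctilde i * U ≤ minOnIcc w (S.a i) (S.b i) := by
    refine le_csInf (hne.image w) ?_
    rintro x ⟨t, ht, rfl⟩
    exact hlower t ht
  exact le_trans (mul_le_mul_of_nonneg_left hsupU hct0) hminU

private lemma beta_nonneg {m : Measure ℝ} (hm : m (Icc (0:ℝ) 1)ᶜ = 0) {u : ℝ → ℝ}
    (hu0 : ∀ t ∈ Icc (0:ℝ) 1, 0 ≤ u t) : 0 ≤ ∫ s, u s ∂m := by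
  refine integral_nonneg_of_ae ?_
  have hmem : ∀ᵐ x ∂m, x ∈ Icc (0:ℝ) 1 := by
    rw [ae_iff]
    exact measure_mono_null (fun x hx => hx) hm
  filter_upwards [hmem] with x hx using hu0 x hx

end AuxConeProof

/-- The operator `T` leaves the cone `K` invariant: each component of `T(u,v)` is
nonnegative on `[0,1]` and satisfies `min_{[aᵢ,bᵢ]} Tᵢ(u,v) ≥ c̃ᵢ ‖Tᵢ(u,v)‖∞`. -/
theorem T_maps_cone_into_cone (S : Setup) (u v : ℝ → ℝ) (huv : S.inK u v) :
    (∀ t ∈ Icc (0:ℝ) 1, 0 ≤ S.T1 u v t) ∧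
    (∀ t ∈ Icc (0:ℝ) 1, 0 ≤ S.T2 u v t) ∧
    S.ctilde 0 * supN (S.T1 u v) ≤ minOnIcc (S.T1 u v) (S.a 0) (S.b 0) ∧
    S.ctilde 1 * supN (S.T2 u v) ≤ minOnIcc (S.T2 u v) (S.a 1) (S.b 1) := by
  obtain ⟨hu, hv, hu0, hv0, -, -⟩ := huv
  have hβu : ∀ i j : Fin 2, 0 ≤ S.β i j u := fun i j => beta_nonneg (S.B_supp i j) hu0
  have hβv : ∀ i j : Fin 2, 0 ≤ S.β i j v := fun i j => beta_nonneg (S.B_supp i j) hv0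
  have hδu : ∀ i j : Fin 2, 0 ≤ S.δ i j u := fun i j => beta_nonneg (S.C_supp i j) hu0
  have hδv : ∀ i j : Fin 2, 0 ≤ S.δ i j v := fun i j => beta_nonneg (S.C_supp i j) hv0
  have hA1 : 0 ≤ S.H 0 0 (S.β 0 0 u) + S.L 0 0 (S.δ 0 0 v) :=
    add_nonneg (S.H_nonneg 0 0 _ (hβu 0 0)) (S.L_nonneg 0 0 _ (hδv 0 0))
  have hB1 : 0 ≤ S.H 0 1 (S.β 0 1 u) + S.L 0 1 (S.δ 0 1 v) :=
    add_nonneg (S.H_nonneg 0 1 _ (hβu 0 1)) (S.L_nonneg 0 1 _ (hδv 0 1))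
  have hA2 : 0 ≤ S.L 1 0 (S.δ 1 0 u) + S.H 1 0 (S.β 1 0 v) :=
    add_nonneg (S.L_nonneg 1 0 _ (hδu 1 0)) (S.H_nonneg 1 0 _ (hβv 1 0))
  have hB2 : 0 ≤ S.L 1 1 (S.δ 1 1 u) + S.H 1 1 (S.β 1 1 v) :=
    add_nonneg (S.L_nonneg 1 1 _ (hδu 1 1)) (S.H_nonneg 1 1 _ (hβv 1 1))
  have h1 := component_cone S 0 hu hv hu0 hv0 hA1 hB1 (w := S.T1 u v) (fun t => rfl)
  have h2 := component_cone S 1 hu hv hu0 hv0 hA2 hB2 (w := S.T2 u v) (fun t => rfl)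
  exact ⟨h1.1, h2.1, h1.2, h2.2⟩
end
end
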